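/- Assume both the β-strong P-order and the γ-strong C-order assumptions hold for some β ≥ 0 and γ ≥ 0 with β+γ ≤ 1. Then every Naive-Local matching M' is a maximum-weight matching: w(M) ≤ w(M') for every matching M of the instance. -/
import Mathlib


/-- A matching of a bipartite instance with edge set `E ⊆ P × C`. -/
def IsBipMatching {s q : ℕ} (E M : Finset (Fin s × Fin q)) : Prop :=
  M ⊆ E ∧ ∀ e₁ ∈ M, ∀ e₂ ∈ M, e₁ ≠ e₂ → e₁.1 ≠ e₂.1 ∧ e₁.2 ≠ e₂.2

/-- The β-strong P-order assumption. -/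
def StrongPOrder {s q : ℕ} (E : Finset (Fin s × Fin q)) (w : Fin s × Fin q → ℝ)
    (β : ℝ) : Prop :=
  ∀ i j : Fin s, i < j → ∀ c : Fin q, (i, c) ∈ E → (j, c) ∈ E → w (j, c) ≤ β * w (i, c)

/-- The γ-strong C-order assumption. -/
def StrongCOrder {s q : ℕ} (E : Finset (Fin s × Fin q)) (w : Fin s × Fin q → ℝ)
    (γ : ℝ) : Prop :=
  ∀ i j : Fin q, i < j → ∀ p : Fin s, (p, i) ∈ E → (p, j) ∈ E → w (p, j) ≤ γ * w (p, i)

/-- A Naive-Local matching: a matching `M'` such that every edge `(p_j, c_x) ∈ E \ M'`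
is either blocked (some `(p_i, c_x) ∈ M'` with `i < j`) or skipped in favour of an
earlier C-neighbor (some `(p_j, c_y) ∈ M'` with `y < x`). -/
def NaiveLocal {s q : ℕ} (E M' : Finset (Fin s × Fin q)) : Prop :=
  IsBipMatching E M' ∧ ∀ e ∈ E, e ∉ M' →
    (∃ i : Fin s, i < e.1 ∧ (i, e.2) ∈ M') ∨
    (∃ y : Fin q, y < e.2 ∧ (e.1, y) ∈ M')

/-- Sum over a subsingleton finset with a uniform bound. -/
lemma sum_subsingleton_le {α : Type*} (T : Finset α) (w : α → ℝ) (c : ℝ) (hc : 0 ≤ c)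
    (hsub : ∀ a ∈ T, ∀ b ∈ T, a = b) (hle : ∀ a ∈ T, w a ≤ c) :
    ∑ a ∈ T, w a ≤ c := by
  rcases T.eq_empty_or_nonempty with h | ⟨a, ha⟩
  · simp [h, hc]
  · have hT : T = {a} := Finset.eq_singleton_iff_unique_mem.mpr
      ⟨ha, fun b hb => hsub b hb a ha⟩
    rw [hT, Finset.sum_singleton]; exact hle a ha

/-- Under both the β-strong P-order and the γ-strong C-order assumptions with β + γ ≤ 1,
every Naive-Local matching is a maximum-weight matching. -/
theorem stmt5 {s q : ℕ} (E : Finset (Fin s × Fin q)) (w : Fin s × Fin q → ℝ)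
    (hw : ∀ e ∈ E, 0 < w e) (β γ : ℝ) (hβ : 0 ≤ β) (hγ : 0 ≤ γ)
    (hsum : β + γ ≤ 1)
    (hordP : StrongPOrder E w β) (hordC : StrongCOrder E w γ)
    (M' : Finset (Fin s × Fin q)) (hM' : NaiveLocal E M')
    (M : Finset (Fin s × Fin q)) (hM : IsBipMatching E M) :
    ∑ e ∈ M, w e ≤ ∑ e ∈ M', w e := by
  classical
  obtain ⟨⟨hM'E, hM'match⟩, hlocal⟩ := hM'
  obtain ⟨hME, hMmatch⟩ := hM
  have hcharge : ∀ e ∈ M, ∃ f, f ∈ M' ∧ (e = f ∨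
      (f.2 = e.2 ∧ f.1 < e.1 ∧ w e ≤ β * w f) ∨
      (f.1 = e.1 ∧ f.2 < e.2 ∧ w e ≤ γ * w f)) := by
    intro e he
    by_cases heM' : e ∈ M'
    · exact ⟨e, heM', Or.inl rfl⟩
    · rcases hlocal e (hME he) heM' with ⟨i, hi, hiM'⟩ | ⟨y, hy, hyM'⟩
      · refine ⟨(i, e.2), hiM', Or.inr (Or.inl ⟨rfl, hi, ?_⟩)⟩
        have := hordP i e.1 hi e.2 (hM'E hiM') (by simpa using hME he)
        simpa using this
      · refine ⟨(e.1, y), hyM', Or.inr (Or.inr ⟨rfl, hy, ?_⟩)⟩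
        have := hordC y e.2 hy e.1 (hM'E hyM') (by simpa using hME he)
        simpa using this
  choose! φ hφM' hφ using hcharge
  rw [← Finset.sum_fiberwise_of_maps_to (g := φ) hφM' w]
  apply Finset.sum_le_sum
  intro f hf
  have hwf : 0 ≤ w f := le_of_lt (hw f (hM'E hf))
  set T := M.filter (fun e => φ e = f) with hTdef
  have hTM : ∀ e ∈ T, e ∈ M := fun e he => (Finset.mem_filter.mp he).1
  have hTcharge : ∀ e ∈ T, e = f ∨
      (f.2 = e.2 ∧ f.1 < e.1 ∧ w e ≤ β * w f) ∨
      (f.1 = e.1 ∧ f.2 < e.2 ∧ w e ≤ γ * w f) := by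
    intro e he
    have h1 := hφ e (hTM e he)
    rwa [(Finset.mem_filter.mp he).2] at h1
  by_cases hfM : f ∈ M
  · have hsub : T ⊆ {f} := by
      intro e he
      rw [Finset.mem_singleton]
      by_contra hne
      have hmm := hMmatch e (hTM e he) f hfM hne
      rcases hTcharge e he with h | ⟨h2, _, _⟩ | ⟨h1, _, _⟩
      · exact hne h
      · exact hmm.2 h2.symm
      · exact hmm.1 h1.symm
    calc ∑ e ∈ T, w e ≤ ∑ e ∈ ({f} : Finset _), w e :=
          Finset.sum_le_sum_of_subset_of_nonneg hsub
            (by intro x hx _; rw [Finset.mem_singleton] at hx; rw [hx]; exact hwf)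
      _ = w f := Finset.sum_singleton _ _
  · have hnef : ∀ e ∈ T, e ≠ f := fun e he h => hfM (h ▸ hTM e he)
    have hsplit : ∑ e ∈ T, w e
        = ∑ e ∈ T.filter (fun e => e.2 = f.2), w e
          + ∑ e ∈ T.filter (fun e => ¬ e.2 = f.2), w e :=
      (Finset.sum_filter_add_sum_filter_not T _ w).symm
    have hPle : ∑ e ∈ T.filter (fun e => e.2 = f.2), w e ≤ β * w f := by
      apply sum_subsingleton_le _ _ _ (mul_nonneg hβ hwf)
      · intro a ha b hb
        obtain ⟨haT, ha2⟩ := Finset.mem_filter.mp ha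
        obtain ⟨hbT, hb2⟩ := Finset.mem_filter.mp hb
        by_contra hne
        exact (hMmatch a (hTM a haT) b (hTM b hbT) hne).2 (ha2.trans hb2.symm)
      · intro a ha
        obtain ⟨haT, ha2⟩ := Finset.mem_filter.mp ha
        rcases hTcharge a haT with h | ⟨_, _, hle⟩ | ⟨_, hlt, _⟩
        · exact absurd h (hnef a haT)
        · exact hle
        · exact absurd ha2.symm (ne_of_lt hlt)
    have hCle : ∑ e ∈ T.filter (fun e => ¬ e.2 = f.2), w e ≤ γ * w f := by
      apply sum_subsingleton_le _ _ _ (mul_nonneg hγ hwf)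
      · intro a ha b hb
        obtain ⟨haT, ha2⟩ := Finset.mem_filter.mp ha
        obtain ⟨hbT, hb2⟩ := Finset.mem_filter.mp hb
        have ha1 : f.1 = a.1 := by
          rcases hTcharge a haT with h | ⟨h2, _, _⟩ | ⟨h1, _, _⟩
          · exact absurd h (hnef a haT)
          · exact absurd h2.symm ha2
          · exact h1
        have hb1 : f.1 = b.1 := by
          rcases hTcharge b hbT with h | ⟨h2, _, _⟩ | ⟨h1, _, _⟩
          · exact absurd h (hnef b hbT)
          · exact absurd h2.symm hb2
          · exact h1
        by_contra hne
        exact (hMmatch a (hTM a haT) b (hTM b hbT) hne).1 (ha1.symm.trans hb1)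
      · intro a ha
        obtain ⟨haT, ha2⟩ := Finset.mem_filter.mp ha
        rcases hTcharge a haT with h | ⟨h2, _, _⟩ | ⟨_, _, hle⟩
        · exact absurd h (hnef a haT)
        · exact absurd h2.symm ha2
        · exact hle
    calc ∑ e ∈ T, w e
        ≤ β * w f + γ * w f := by rw [hsplit]; exact add_le_add hPle hCle
      _ = (β + γ) * w f := by ring
      _ ≤ 1 * w f := mul_le_mul_of_nonneg_right hsum hwf
      _ = w f := one_mul _
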